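/- Let P be an R-module of finite length whose cosocle is simple, i.e., P has a unique maximal proper submodule M. Suppose P embeds in a multiplicity-free finite length module C, that Q is another submodule of C, and that every composition factor of M is isomorphic to a composition factor of Q. Then the image of M in C is contained in Q; in particular M embeds into Q. -/

import Mathlib

/-- The `i`-th composition factor (as a module) of a composition series of submodules:
the quotient of `s i.succ` by `s i.castSucc`. -/
abbrev csFactor (R : Type*) [Ring R] {M : Type*} [AddCommGroup M] [Module R M]
    (s : CompositionSeries (Submodule R M)) (i : Fin s.length) : Type _ :=
  ↥(s i.succ) ⧸ Submodule.comap (s i.succ).subtype (s i.castSucc)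

/-- A composition series of the whole module: starts at `⊥` and ends at `⊤`. -/
def IsCompSeriesOf (R : Type*) [Ring R] {M : Type*} [AddCommGroup M] [Module R M]
    (s : CompositionSeries (Submodule R M)) : Prop :=
  s.head = ⊥ ∧ s.last = ⊤

/-- The multiplicity of `S` among the factors of the composition series `s`. -/
noncomputable def multS (R : Type*) [Ring R] {M : Type*} [AddCommGroup M] [Module R M]
    (S : Type*) [AddCommGroup S] [Module R S]
    (s : CompositionSeries (Submodule R M)) : ℕ :=
  Nat.card {i : Fin s.length // Nonempty (csFactor R s i ≃ₗ[R] S)}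

/-- A composition series is multiplicity-free if its factors are pairwise non-isomorphic. -/
def MultFree (R : Type*) [Ring R] {M : Type*} [AddCommGroup M] [Module R M]
    (s : CompositionSeries (Submodule R M)) : Prop :=
  ∀ i j : Fin s.length, Nonempty (csFactor R s i ≃ₗ[R] csFactor R s j) → i = j

section Helpers

variable {R : Type*} [Ring R]

/-- If the kernel of `f` is contained in `x` and `x ⋖ y`, then `map f x ⋖ map f y`. -/
private lemma map_covBy_of_ker_le {A B : Type*} [AddCommGroup A] [Module R A]
    [AddCommGroup B] [Module R B] (f : A →ₗ[R] B) {x y : Submodule R A}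
    (hker : LinearMap.ker f ≤ x) (hxy : x ⋖ y) :
    Submodule.map f x ⋖ Submodule.map f y := by
  have hx : Submodule.comap f (Submodule.map f x) = x := by
    rw [Submodule.comap_map_eq, sup_eq_left.2 hker]
  have hy : Submodule.comap f (Submodule.map f y) = y := by
    rw [Submodule.comap_map_eq, sup_eq_left.2 (hker.trans hxy.le)]
  constructor
  · refine lt_of_le_of_ne (Submodule.map_mono hxy.le) fun hEq => hxy.lt.ne ?_
    rw [← hx, ← hy, hEq]
  · intro z hz1 hz2
    have hzr : z ≤ LinearMap.range f := hz2.le.trans (LinearMap.map_le_range)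
    have hz : Submodule.map f (Submodule.comap f z) = z := by
      rw [Submodule.map_comap_eq, inf_eq_right.2 hzr]
    have h1 : x < Submodule.comap f z := by
      refine lt_of_le_of_ne (by rw [← hx]; exact Submodule.comap_mono hz1.le) fun e => ?_
      exact hz1.ne (by rw [← hz, ← e])
    have h2 : Submodule.comap f z < y := by
      refine lt_of_le_of_ne (by rw [← hy]; exact Submodule.comap_mono hz2.le) fun e => ?_
      exact hz2.ne (by rw [← hz, e, ← hy, Submodule.map_comap_eq, inf_eq_right.2
        LinearMap.map_le_range])
    exact hxy.2 h1 h2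

/-- If `f` is surjective and `x ⋖ y`, then `comap f x ⋖ comap f y`. -/
private lemma comap_covBy_of_surjective {A B : Type*} [AddCommGroup A] [Module R A]
    [AddCommGroup B] [Module R B] (f : A →ₗ[R] B) (hf : Function.Surjective f)
    {x y : Submodule R B} (hxy : x ⋖ y) :
    Submodule.comap f x ⋖ Submodule.comap f y := by
  have hx : Submodule.map f (Submodule.comap f x) = x :=
    Submodule.map_comap_eq_of_surjective hf x
  have hy : Submodule.map f (Submodule.comap f y) = y :=
    Submodule.map_comap_eq_of_surjective hf y
  have hkerx : LinearMap.ker f ≤ Submodule.comap f x := by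
    intro a ha
    simp only [Submodule.mem_comap, LinearMap.mem_ker.mp ha]
    exact x.zero_mem
  constructor
  · refine lt_of_le_of_ne (Submodule.comap_mono hxy.le) fun hEq => hxy.lt.ne ?_
    rw [← hx, ← hy, hEq]
  · intro z hz1 hz2
    have hz : Submodule.comap f (Submodule.map f z) = z := by
      rw [Submodule.comap_map_eq, sup_eq_left.2 (hkerx.trans hz1.le)]
    have h1 : x < Submodule.map f z := by
      refine lt_of_le_of_ne (by rw [← hx]; exact Submodule.map_mono hz1.le) fun e => ?_
      exact hz1.ne (by rw [← hz, ← e, ← hx, Submodule.comap_map_eq,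
        sup_eq_left.2 hkerx])
    have h2 : Submodule.map f z < y := by
      refine lt_of_le_of_ne (by rw [← hy]; exact Submodule.map_mono hz2.le) fun e => ?_
      exact hz2.ne (by rw [← hz, e])
    exact hxy.2 h1 h2

/-- Equal pairs of submodules give isomorphic "factors". -/
private lemma factor_congr {C : Type*} [AddCommGroup C] [Module R C]
    {A B A' B' : Submodule R C} (h1 : A = A') (h2 : B = B') :
    Nonempty ((↥B ⧸ Submodule.comap B.subtype A) ≃ₗ[R]
      (↥B' ⧸ Submodule.comap B'.subtype A')) := by
  subst h1; subst h2; exact ⟨LinearEquiv.refl _ _⟩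

/-- The factor of `(map f x, map f y)` is isomorphic to the factor of `(x, y)`
when `ker f ≤ x`. -/
private noncomputable def factorIsoMap {A B : Type*} [AddCommGroup A] [Module R A]
    [AddCommGroup B] [Module R B] (f : A →ₗ[R] B) {x : Submodule R A} (y : Submodule R A)
    (hker : LinearMap.ker f ≤ x) :
    (↥y ⧸ Submodule.comap y.subtype x) ≃ₗ[R]
      ↥(Submodule.map f y) ⧸
        Submodule.comap (Submodule.map f y).subtype (Submodule.map f x) := by
  set q := Submodule.comap (Submodule.map f y).subtype (Submodule.map f x) with hq
  let F : ↥y →ₗ[R] ↥(Submodule.map f y) :=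
    f.restrict fun a ha => Submodule.mem_map_of_mem ha
  let φ : ↥y →ₗ[R] ↥(Submodule.map f y) ⧸ q := q.mkQ.comp F
  have hFsurj : Function.Surjective F := by
    rintro ⟨b, hb⟩
    obtain ⟨a, ha, rfl⟩ := hb
    exact ⟨⟨a, ha⟩, rfl⟩
  have hsurj : Function.Surjective φ := (Submodule.mkQ_surjective q).comp hFsurj
  have hker_eq : LinearMap.ker φ = Submodule.comap y.subtype x := by
    ext ⟨a, ha⟩
    simp only [LinearMap.mem_ker, LinearMap.comp_apply, Submodule.mkQ_apply,
      Submodule.Quotient.mk_eq_zero, hq, Submodule.mem_comap, φ, F,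
      LinearMap.restrict_apply, Submodule.coe_subtype]
    constructor
    · rintro ⟨a', ha'x, heq⟩
      have h2 : a - a' ∈ x := hker (by simp [LinearMap.mem_ker, map_sub, heq])
      have := x.add_mem ha'x h2
      rwa [add_sub_cancel] at this
    · intro hx
      exact ⟨a, hx, rfl⟩
  exact (Submodule.quotEquivOfEq _ _ hker_eq.symm).trans (φ.quotKerEquivOfSurjective hsurj)

/-- The factor of `(comap f x, comap f y)` is isomorphic to the factor of `(x, y)`
when `f` is surjective. -/
private noncomputable def factorIsoComap {A B : Type*} [AddCommGroup A] [Module R A]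
    [AddCommGroup B] [Module R B] (f : A →ₗ[R] B) (hf : Function.Surjective f)
    (x y : Submodule R B) :
    (↥(Submodule.comap f y) ⧸
        Submodule.comap (Submodule.comap f y).subtype (Submodule.comap f x)) ≃ₗ[R]
      ↥y ⧸ Submodule.comap y.subtype x := by
  set q := Submodule.comap y.subtype x with hq
  let F : ↥(Submodule.comap f y) →ₗ[R] ↥y :=
    f.restrict (p := Submodule.comap f y) (q := y) fun a ha => Submodule.mem_comap.mp ha
  let φ : ↥(Submodule.comap f y) →ₗ[R] ↥y ⧸ q := q.mkQ.comp F
  have hFsurj : Function.Surjective F := by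
    rintro ⟨b, hb⟩
    obtain ⟨a, rfl⟩ := hf b
    exact ⟨⟨a, hb⟩, rfl⟩
  have hsurj : Function.Surjective φ := (Submodule.mkQ_surjective q).comp hFsurj
  have hker_eq : LinearMap.ker φ =
      Submodule.comap (Submodule.comap f y).subtype (Submodule.comap f x) := by
    ext ⟨a, ha⟩
    simp only [LinearMap.mem_ker, LinearMap.comp_apply, Submodule.mkQ_apply,
      Submodule.Quotient.mk_eq_zero, hq, Submodule.mem_comap, φ, F,
      LinearMap.restrict_apply, Submodule.coe_subtype]
  exact (Submodule.quotEquivOfEq _ _ hker_eq.symm).trans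
    (φ.quotKerEquivOfSurjective hsurj)

/-- Existence of a composition series between any two comparable submodules of a
module of finite length. -/
private lemma exists_series {A : Type*} [AddCommGroup A] [Module R A]
    [IsNoetherian R A] [IsArtinian R A] {a b : Submodule R A} (hab : a ≤ b) :
    ∃ s : CompositionSeries (Submodule R A), s.head = a ∧ s.last = b := by
  revert hab
  refine (wellFounded_gt (α := Submodule R A)).induction
    (C := fun a => a ≤ b → ∃ s : CompositionSeries (Submodule R A),
      s.head = a ∧ s.last = b) a ?_
  intro a ih hab
  rcases eq_or_lt_of_le hab with rfl | hlt
  · exact ⟨RelSeries.singleton _ a, rfl, rfl⟩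
  · obtain ⟨y, ⟨hay, hyb⟩, hmin⟩ := (wellFounded_lt (α := Submodule R A)).has_min
      {z | a < z ∧ z ≤ b} ⟨b, hlt, le_rfl⟩
    have cov : a ⋖ y := ⟨hay, fun z haz hzy => hmin z ⟨haz, hzy.le.trans hyb⟩ hzy⟩
    obtain ⟨s, hh, hl⟩ := ih y hay hyb
    have hcov : a ⋖ s.head := by rw [hh]; exact cov
    exact ⟨s.cons a hcov, RelSeries.head_cons _ _ _,
      by rw [RelSeries.last_cons]; exact hl⟩

end Helpers

theorem stmt10 {R P C : Type*} [Ring R] [AddCommGroup P] [Module R P]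
    [AddCommGroup C] [Module R C]
    (hP : IsFiniteLength R P)
    (M₀ : Submodule R P) (hM₀ : M₀ ≠ ⊤) (hmax : ∀ N : Submodule R P, N ≠ ⊤ → N ≤ M₀)
    (ι : P →ₗ[R] C) (hι : Function.Injective ι)
    (sC : CompositionSeries (Submodule R C)) (hsC : IsCompSeriesOf R sC)
    (hmf : MultFree R sC)
    (Q : Submodule R C)
    (sM : CompositionSeries (Submodule R ↥M₀)) (hsM : IsCompSeriesOf R sM)
    (sQ : CompositionSeries (Submodule R ↥Q)) (hsQ : IsCompSeriesOf R sQ)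
    (h : ∀ i : Fin sM.length, ∃ j : Fin sQ.length,
      Nonempty (csFactor R sM i ≃ₗ[R] csFactor R sQ j)) :
    M₀.map ι ≤ Q := by
  by_contra hcon
  -- finite length instances
  have hC : IsFiniteLength R C :=
    isFiniteLength_of_exists_compositionSeries ⟨sC, hsC.1, hsC.2⟩
  obtain ⟨hCn, hCa⟩ := isFiniteLength_iff_isNoetherian_isArtinian.mp hC
  have hM : IsFiniteLength R ↥M₀ :=
    isFiniteLength_of_exists_compositionSeries ⟨sM, hsM.1, hsM.2⟩
  obtain ⟨hMn, hMa⟩ := isFiniteLength_iff_isNoetherian_isArtinian.mp hM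
  -- g : M₀ → C ⧸ Q
  set g : ↥M₀ →ₗ[R] C ⧸ Q := (Q.mkQ.comp ι).comp M₀.subtype with hg
  have hker_ne : LinearMap.ker g ≠ ⊤ := by
    intro htop
    apply hcon
    rintro _ ⟨m, hm, rfl⟩
    have : (⟨m, hm⟩ : ↥M₀) ∈ LinearMap.ker g := htop ▸ Submodule.mem_top
    simpa [hg, LinearMap.mem_ker, Submodule.Quotient.mk_eq_zero] using this
  -- maximal proper submodule of M₀ containing ker g
  obtain ⟨K₁, ⟨hKK₁, hK₁⟩, hmax'⟩ := (wellFounded_gt (α := Submodule R ↥M₀)).has_min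
    {z | LinearMap.ker g ≤ z ∧ z ≠ ⊤} ⟨LinearMap.ker g, le_rfl, hker_ne⟩
  have covK₁ : K₁ ⋖ (⊤ : Submodule R ↥M₀) :=
    ⟨hK₁.lt_top, fun z h1 h2 => hmax' z ⟨hKK₁.trans h1.le, h2.ne⟩ h1⟩
  -- the simple factor
  set SFac := (↥(⊤ : Submodule R ↥M₀) ⧸
    Submodule.comap (⊤ : Submodule R ↥M₀).subtype K₁) with hSFac
  -- series of M₀ ending with step K₁ ⋖ ⊤, JH-equivalent to sM
  obtain ⟨t, ht1, ht2⟩ := exists_series (bot_le : ⊥ ≤ K₁)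
  have htK : t.last ⋖ (⊤ : Submodule R ↥M₀) := by rw [ht2]; exact covK₁
  set sK : CompositionSeries (Submodule R ↥M₀) := t.snoc ⊤ htK with hsK
  obtain ⟨e, he⟩ := CompositionSeries.jordan_holder sK sM
    (by show (t.snoc ⊤ htK).head = sM.head
        rw [RelSeries.head_snoc, ht1, hsM.1])
    (by show (t.snoc ⊤ htK).last = sM.last
        rw [RelSeries.last_snoc, hsM.2])
  set iS : Fin sK.length := Fin.last t.length with hiS
  have hv1 : sK iS.castSucc = K₁ :=
    (RelSeries.snoc_castSucc t ⊤ htK (Fin.last t.length)).trans ht2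
  have hv2 : sK iS.succ = ⊤ := RelSeries.last_snoc t ⊤ htK
  have hfacM : Nonempty (csFactor R sM (e iS) ≃ₗ[R] SFac) := by
    have h1 : Nonempty ((↥(sK iS.succ) ⧸ Submodule.comap (sK iS.succ).subtype (sK iS.castSucc))
        ≃ₗ[R] csFactor R sM (e iS)) := ⟨(he iS).linearEquiv⟩
    obtain ⟨f1⟩ := h1
    obtain ⟨f2⟩ := factor_congr (R := R) hv1 hv2
    exact ⟨f1.symm.trans f2⟩
  obtain ⟨j, hj⟩ := h (e iS)
  have hfacQ : Nonempty (csFactor R sQ j ≃ₗ[R] SFac) := by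
    obtain ⟨f1⟩ := hj
    obtain ⟨f2⟩ := hfacM
    exact ⟨f1.symm.trans f2⟩
  -- the C-side: K' ⋖ Q' above Q with factor SFac
  set K' : Submodule R C := Submodule.comap Q.mkQ (Submodule.map g K₁) with hK'
  set Q' : Submodule R C := Submodule.comap Q.mkQ (Submodule.map g ⊤) with hQ'
  have cov1 : Submodule.map g K₁ ⋖ Submodule.map g ⊤ := map_covBy_of_ker_le g hKK₁ covK₁
  have cov2 : K' ⋖ Q' := comap_covBy_of_surjective Q.mkQ (Submodule.mkQ_surjective Q) cov1
  have hQK' : Q ≤ K' := by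
    intro x hx
    show x ∈ Submodule.comap Q.mkQ (Submodule.map g K₁)
    rw [Submodule.mem_comap, show Q.mkQ x = 0 from (Submodule.Quotient.mk_eq_zero Q).mpr hx]
    exact (Submodule.map g K₁).zero_mem
  -- the step factor is isomorphic to SFac
  have hstep : Nonempty ((↥Q' ⧸ Submodule.comap Q'.subtype K') ≃ₗ[R] SFac) := by
    have estep := factorIsoComap Q.mkQ (Submodule.mkQ_surjective Q)
      (Submodule.map g K₁) (Submodule.map g ⊤)
    have emap := factorIsoMap g (⊤ : Submodule R ↥M₀) hKK₁
    exact ⟨estep.trans emap.symm⟩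
  -- build the big series of C
  set fmap : ((· ⋖ ·) : Submodule R ↥Q → Submodule R ↥Q → Prop) →r
      ((· ⋖ ·) : Submodule R C → Submodule R C → Prop) :=
    ⟨Submodule.map Q.subtype, fun hab =>
      map_covBy_of_ker_le Q.subtype (by rw [Submodule.ker_subtype]; exact bot_le) hab⟩ with hfmap
  set low : CompositionSeries (Submodule R C) := sQ.map fmap with hlow
  have hlowlast : low.last = Q := by
    rw [hlow, RelSeries.last_map, hsQ.2]
    exact Submodule.map_subtype_top Q
  obtain ⟨m, hm1, hm2⟩ := exists_series hQK'
  set st0 : CompositionSeries (Submodule R C) := RelSeries.singleton _ K' with hst0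
  have hstK : st0.last ⋖ Q' := cov2
  set st : CompositionSeries (Submodule R C) := st0.snoc Q' hstK with hst
  obtain ⟨u, hu1, hu2⟩ := exists_series (le_top : Q' ≤ (⊤ : Submodule R C))
  have c3 : st.last = u.head := by rw [hu1]; exact RelSeries.last_snoc _ _ _
  set inner2 : CompositionSeries (Submodule R C) := st.smash u c3 with hinner2
  have c2 : m.last = inner2.head := by
    rw [hm2, hinner2, RelSeries.head_smash, hst, RelSeries.head_snoc]
    rfl
  set inner1 : CompositionSeries (Submodule R C) := m.smash inner2 c2 with hinner1
  have c1 : low.last = inner1.head := by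
    rw [hlowlast, hinner1, RelSeries.head_smash, hm1]
  set s₁ : CompositionSeries (Submodule R C) := low.smash inner1 c1 with hs₁
  obtain ⟨e', he'⟩ := CompositionSeries.jordan_holder s₁ sC
    (by rw [hs₁, RelSeries.head_smash, hlow, RelSeries.head_map, hsQ.1, hsC.1]
        exact Submodule.map_bot _)
    (by rw [hs₁, RelSeries.last_smash, hinner1, RelSeries.last_smash, hinner2,
        RelSeries.last_smash, hu2, hsC.2])
  -- index i₁ : the factor ≅ csFactor sQ j in the low part
  set i₁ : Fin s₁.length := Fin.castAdd inner1.length j with hi₁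
  have hv₁c : s₁ i₁.castSucc = Submodule.map Q.subtype (sQ j.castSucc) :=
    RelSeries.smash_castAdd c1 j
  have hv₁s : s₁ i₁.succ = Submodule.map Q.subtype (sQ j.succ) :=
    RelSeries.smash_succ_castAdd c1 j
  have hfac₁ : Nonempty (csFactor R s₁ i₁ ≃ₗ[R] SFac) := by
    obtain ⟨f0⟩ := factor_congr (R := R) hv₁c hv₁s
    obtain ⟨f2⟩ := hfacQ
    refine ⟨f0.trans ((factorIsoMap Q.subtype (sQ j.succ)
      (by rw [Submodule.ker_subtype]; exact bot_le)).symm.trans f2)⟩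
  -- index i₂ : the step K' ⋖ Q'
  set i₂ : Fin s₁.length := Fin.natAdd low.length
    (Fin.natAdd m.length (Fin.castAdd u.length (0 : Fin 1))) with hi₂
  have hv₂c : s₁ i₂.castSucc = K' := by
    have e1 := RelSeries.smash_natAdd c1 (Fin.natAdd m.length (Fin.castAdd u.length (0 : Fin 1)))
    have e2 := RelSeries.smash_natAdd c2 (Fin.castAdd u.length (0 : Fin 1))
    have e3 := RelSeries.smash_castAdd c3 (0 : Fin 1)
    have e4 : st ((0 : Fin 1).castSucc) = K' := RelSeries.snoc_castSucc st0 Q' hstK (0 : Fin 1)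
    exact e1.trans (e2.trans (e3.trans e4))
  have hv₂s : s₁ i₂.succ = Q' := by
    have f1 := RelSeries.smash_succ_natAdd c1
      (Fin.natAdd m.length (Fin.castAdd u.length (0 : Fin 1)))
    have f2 := RelSeries.smash_succ_natAdd c2 (Fin.castAdd u.length (0 : Fin 1))
    have f3 := RelSeries.smash_succ_castAdd c3 (0 : Fin 1)
    have f4 : st ((0 : Fin 1).succ) = Q' := RelSeries.last_snoc st0 Q' hstK
    exact f1.trans (f2.trans (f3.trans f4))
  have hfac₂ : Nonempty (csFactor R s₁ i₂ ≃ₗ[R] SFac) := by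
    obtain ⟨f0⟩ := factor_congr (R := R) hv₂c hv₂s
    obtain ⟨f2⟩ := hstep
    exact ⟨f0.trans f2⟩
  -- i₁ ≠ i₂
  have hne : i₁ ≠ i₂ := by
    intro hEq
    have hv : (i₁ : ℕ) = (i₂ : ℕ) := congrArg Fin.val hEq
    have h1 : (i₁ : ℕ) = (j : ℕ) := rfl
    have h2 : (i₂ : ℕ) = sQ.length + (m.length + 0) := rfl
    have hj' : (j : ℕ) < sQ.length := j.isLt
    omega
  -- conclude with multiplicity-freeness
  apply hne
  apply e'.injective
  apply hmf
  have g1 : Nonempty (csFactor R s₁ i₁ ≃ₗ[R] csFactor R sC (e' i₁)) := ⟨(he' i₁).linearEquiv⟩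
  have g2 : Nonempty (csFactor R s₁ i₂ ≃ₗ[R] csFactor R sC (e' i₂)) := ⟨(he' i₂).linearEquiv⟩
  obtain ⟨a1⟩ := g1
  obtain ⟨a2⟩ := g2
  obtain ⟨b1⟩ := hfac₁
  obtain ⟨b2⟩ := hfac₂
  exact ⟨a1.symm.trans (b1.trans (b2.symm.trans a2))⟩
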